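/- Let N = (n_ij) ∈ SL(2,ℤ) have real eigenvalues α > 1 and 1/α, with eigenvectors a = (a₁,a₂)ᵀ, b = (b₁,b₂)ᵀ ∈ ℝ² satisfying N a = α a and N b = (1/α) b, let p, q, r be integers with r ≠ 0, let t ∈ ℂ, set θ = a₁b₂ − a₂b₁, set eᵢ = (1/2) n_{i1}(n_{i1}−1) a₁ b₁ + (1/2) n_{i2}(n_{i2}−1) a₂ b₂ + n_{i1} n_{i2} b₁ a₂, and let c₁, c₂ ∈ ℝ satisfy (N − I)(c₁,c₂)ᵀ + (e₁,e₂)ᵀ − (θ/r)(p,q)ᵀ = 0. Define the maps of ℂ² given by g₀(w,z) = (α w, z + t), gᵢ(w,z) = (w + aᵢ, z + bᵢ w + cᵢ) for i = 1,2, and g₃(w,z) = (w, z − θ/r). Then as maps of ℂ² one has g₀∘g₁∘g₀⁻¹ = g₁^{n₁₁}∘g₂^{n₁₂}∘g₃^{p}, g₀∘g₂∘g₀⁻¹ = g₁^{n₂₁}∘g₂^{n₂₂}∘g₃^{q}, g₁∘g₂∘g₁⁻¹∘g₂⁻¹ = g₃^{r}, and g₃ commutes with g₀, g₁ and g₂.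 -/

import Mathlib

private lemma perm_zpow_formula (A B C : ℂ) (G : Equiv.Perm (ℂ × ℂ))
    (hG : ∀ w z : ℂ, G (w, z) = (w + A, z + B * w + C)) :
    ∀ n : ℤ, ∀ w z : ℂ, (G ^ n) (w, z) =
      (w + n * A, z + n * B * w + (n * (n - 1) / 2) * A * B + n * C) := by
  have hGinv : ∀ w z : ℂ, G⁻¹ (w, z) = (w - A, z - B * (w - A) - C) := by
    intro w z
    rw [Equiv.Perm.inv_def, Equiv.symm_apply_eq, hG]
    simp only [Prod.mk.injEq]
    constructor <;> ring
  intro n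
  induction n using Int.induction_on with
  | zero => intro w z; simp
  | succ k ih =>
      intro w z
      rw [zpow_add_one, Equiv.Perm.mul_apply, hG, ih]
      simp only [Prod.mk.injEq]
      push_cast
      constructor <;> ring
  | pred k ih =>
      intro w z
      rw [zpow_sub_one, Equiv.Perm.mul_apply, hGinv, ih]
      simp only [Prod.mk.injEq]
      push_cast
      constructor <;> ring

/-- The generating transformations of an Inoue surface of type `S⁺`, as bijections of
`ℂ²`, satisfy the relations `g₀g₁g₀⁻¹ = g₁^{n₁₁}g₂^{n₁₂}g₃^{p}`,
`g₀g₂g₀⁻¹ = g₁^{n₂₁}g₂^{n₂₂}g₃^{q}`, `g₁g₂g₁⁻¹g₂⁻¹ = g₃^{r}`, and `g₃` commutes with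
`g₀, g₁, g₂`. -/
theorem stmt_15 (N : Matrix (Fin 2) (Fin 2) ℤ) (hN : N.det = 1)
    (α : ℝ) (hα : 1 < α) (a b : Fin 2 → ℝ)
    (ha : (N.map (Int.cast : ℤ → ℝ)).mulVec a = α • a)
    (hb : (N.map (Int.cast : ℤ → ℝ)).mulVec b = (1 / α) • b)
    (p q r : ℤ) (hr : r ≠ 0) (t : ℂ) (θ : ℝ) (hθ : θ = a 0 * b 1 - a 1 * b 0)
    (e : Fin 2 → ℝ)
    (he : ∀ i, e i = (1 / 2 : ℝ) * (N i 0 : ℝ) * ((N i 0 : ℝ) - 1) * a 0 * b 0 +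
      (1 / 2 : ℝ) * (N i 1 : ℝ) * ((N i 1 : ℝ) - 1) * a 1 * b 1 +
      (N i 0 : ℝ) * (N i 1 : ℝ) * b 0 * a 1)
    (c : Fin 2 → ℝ)
    (hc : (N.map (Int.cast : ℤ → ℝ) - 1).mulVec c + e -
      (θ / (r : ℝ)) • ![(p : ℝ), (q : ℝ)] = 0)
    (G0 G1 G2 G3 : Equiv.Perm (ℂ × ℂ))
    (hG0 : ∀ w z : ℂ, G0 (w, z) = ((α : ℂ) * w, z + t))
    (hG1 : ∀ w z : ℂ, G1 (w, z) = (w + (a 0 : ℂ), z + (b 0 : ℂ) * w + (c 0 : ℂ)))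
    (hG2 : ∀ w z : ℂ, G2 (w, z) = (w + (a 1 : ℂ), z + (b 1 : ℂ) * w + (c 1 : ℂ)))
    (hG3 : ∀ w z : ℂ, G3 (w, z) = (w, z - ((θ / (r : ℝ) : ℝ) : ℂ))) :
    G0 * G1 * G0⁻¹ = G1 ^ (N 0 0) * G2 ^ (N 0 1) * G3 ^ p ∧
    G0 * G2 * G0⁻¹ = G1 ^ (N 1 0) * G2 ^ (N 1 1) * G3 ^ q ∧
    G1 * G2 * G1⁻¹ * G2⁻¹ = G3 ^ r ∧
    Commute G3 G0 ∧ Commute G3 G1 ∧ Commute G3 G2 := by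
  have hα0 : (α : ℝ) ≠ 0 := by positivity
  have hr0 : (r : ℝ) ≠ 0 := Int.cast_ne_zero.mpr hr
  -- row equations, real
  have haRow : ∀ i, (N i 0 : ℝ) * a 0 + (N i 1 : ℝ) * a 1 = α * a i := by
    intro i
    have := congrFun ha i
    simpa [Matrix.mulVec, dotProduct, Fin.sum_univ_two, Matrix.map_apply] using this
  have hbRow : ∀ i, α * ((N i 0 : ℝ) * b 0 + (N i 1 : ℝ) * b 1) = b i := by
    intro i
    have h := congrFun hb i
    simp [Matrix.mulVec, dotProduct, Fin.sum_univ_two, Matrix.map_apply] at h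
    rw [h]; field_simp
  -- complex versions
  have haC : ∀ i, ((N i 0 : ℤ) : ℂ) * ((a 0 : ℝ) : ℂ) + ((N i 1 : ℤ) : ℂ) * ((a 1 : ℝ) : ℂ)
      = (α : ℂ) * ((a i : ℝ) : ℂ) := by
    intro i
    have := congrArg (fun x : ℝ => (x : ℂ)) (haRow i)
    push_cast at this ⊢
    exact this
  have hbC : ∀ i, (α : ℂ) * (((N i 0 : ℤ) : ℂ) * ((b 0 : ℝ) : ℂ) + ((N i 1 : ℤ) : ℂ) * ((b 1 : ℝ) : ℂ))
      = ((b i : ℝ) : ℂ) := by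
    intro i
    have := congrArg (fun x : ℝ => (x : ℂ)) (hbRow i)
    push_cast at this ⊢
    exact this
  have hc0 : (((N 0 0 : ℤ) : ℂ) - 1) * ((c 0 : ℝ) : ℂ) + ((N 0 1 : ℤ) : ℂ) * ((c 1 : ℝ) : ℂ)
      + ((1 : ℂ)/2 * ((N 0 0 : ℤ) : ℂ) * (((N 0 0 : ℤ) : ℂ) - 1) * ((a 0 : ℝ) : ℂ) * ((b 0 : ℝ) : ℂ)
      + (1 : ℂ)/2 * ((N 0 1 : ℤ) : ℂ) * (((N 0 1 : ℤ) : ℂ) - 1) * ((a 1 : ℝ) : ℂ) * ((b 1 : ℝ) : ℂ)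
      + ((N 0 0 : ℤ) : ℂ) * ((N 0 1 : ℤ) : ℂ) * ((b 0 : ℝ) : ℂ) * ((a 1 : ℝ) : ℂ))
      - ((θ : ℝ) : ℂ) / ((r : ℤ) : ℂ) * ((p : ℤ) : ℂ) = 0 := by
    have h := congrFun hc 0
    simp only [Pi.add_apply, Pi.sub_apply, Pi.smul_apply, Pi.zero_apply, smul_eq_mul,
      Matrix.mulVec, dotProduct, Fin.sum_univ_two, Matrix.map_apply,
      Matrix.sub_apply, Matrix.one_apply, Matrix.cons_val_zero, Matrix.cons_val_one,
      Matrix.head_cons] at h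
    rw [he] at h
    norm_num at h
    have h2 := congrArg (fun x : ℝ => (x : ℂ)) h
    push_cast at h2
    linear_combination h2
  have hc1 : ((N 1 0 : ℤ) : ℂ) * ((c 0 : ℝ) : ℂ) + (((N 1 1 : ℤ) : ℂ) - 1) * ((c 1 : ℝ) : ℂ)
      + ((1 : ℂ)/2 * ((N 1 0 : ℤ) : ℂ) * (((N 1 0 : ℤ) : ℂ) - 1) * ((a 0 : ℝ) : ℂ) * ((b 0 : ℝ) : ℂ)
      + (1 : ℂ)/2 * ((N 1 1 : ℤ) : ℂ) * (((N 1 1 : ℤ) : ℂ) - 1) * ((a 1 : ℝ) : ℂ) * ((b 1 : ℝ) : ℂ)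
      + ((N 1 0 : ℤ) : ℂ) * ((N 1 1 : ℤ) : ℂ) * ((b 0 : ℝ) : ℂ) * ((a 1 : ℝ) : ℂ))
      - ((θ : ℝ) : ℂ) / ((r : ℤ) : ℂ) * ((q : ℤ) : ℂ) = 0 := by
    have h := congrFun hc 1
    simp only [Pi.add_apply, Pi.sub_apply, Pi.smul_apply, Pi.zero_apply, smul_eq_mul,
      Matrix.mulVec, dotProduct, Fin.sum_univ_two, Matrix.map_apply,
      Matrix.sub_apply, Matrix.one_apply, Matrix.cons_val_zero, Matrix.cons_val_one,
      Matrix.head_cons] at h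
    rw [he] at h
    norm_num at h
    have h2 := congrArg (fun x : ℝ => (x : ℂ)) h
    push_cast at h2
    linear_combination h2
  -- power formulas
  have h1 := perm_zpow_formula _ _ _ G1 hG1
  have h2 := perm_zpow_formula _ _ _ G2 hG2
  have hG3' : ∀ w z : ℂ, G3 (w, z) = (w + 0, z + 0 * w + (-((θ / (r : ℝ) : ℝ) : ℂ))) := by
    intro w z; rw [hG3]; simp [sub_eq_add_neg]
  have h3' := perm_zpow_formula _ _ _ G3 hG3'
  have h3 : ∀ (n : ℤ) (w z : ℂ), (G3 ^ n) (w, z) = (w, z - n * ((θ / (r : ℝ) : ℝ) : ℂ)) := by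
    intro n w z; rw [h3' n]; simp only [Prod.mk.injEq]; constructor <;> ring
  have hθC : ((θ : ℝ) : ℂ) = ((a 0 : ℝ) : ℂ) * ((b 1 : ℝ) : ℂ) - ((a 1 : ℝ) : ℂ) * ((b 0 : ℝ) : ℂ) := by
    rw [hθ]; push_cast; ring
  have hrθ : ((r : ℤ) : ℂ) * (((θ / (r : ℝ)) : ℝ) : ℂ) = ((θ : ℝ) : ℂ) := by
    have hrC : ((r : ℤ) : ℂ) ≠ 0 := Int.cast_ne_zero.mpr hr
    push_cast
    rw [mul_comm, div_mul_cancel₀ _ hrC]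
  refine ⟨?_, ?_, ?_, ?_, ?_, ?_⟩
  · rw [mul_inv_eq_iff_eq_mul]
    refine Equiv.ext fun x => ?_
    obtain ⟨w, z⟩ := x
    simp only [Equiv.Perm.mul_apply, hG0, hG1, h1, h2, h3]
    simp only [Prod.mk.injEq]
    constructor
    · push_cast
      linear_combination -haC 0
    · push_cast
      linear_combination -w * hbC 0 - hc0
  · rw [mul_inv_eq_iff_eq_mul]
    refine Equiv.ext fun x => ?_
    obtain ⟨w, z⟩ := x
    simp only [Equiv.Perm.mul_apply, hG0, hG2, h1, h2, h3]
    simp only [Prod.mk.injEq]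
    constructor
    · push_cast
      linear_combination -haC 1
    · push_cast
      linear_combination -w * hbC 1 - hc1
  · rw [mul_inv_eq_iff_eq_mul, mul_inv_eq_iff_eq_mul]
    refine Equiv.ext fun x => ?_
    obtain ⟨w, z⟩ := x
    simp only [Equiv.Perm.mul_apply, hG1, hG2, h3]
    simp only [Prod.mk.injEq]
    constructor
    · ring
    · linear_combination hrθ + hθC
  · refine Equiv.ext fun x => ?_
    obtain ⟨w, z⟩ := x
    simp only [Equiv.Perm.mul_apply, hG0, hG3]
    simp only [Prod.mk.injEq]
    constructor
    · trivial
    · ring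
  · refine Equiv.ext fun x => ?_
    obtain ⟨w, z⟩ := x
    simp only [Equiv.Perm.mul_apply, hG1, hG3]
    simp only [Prod.mk.injEq]
    constructor
    · trivial
    · ring
  · refine Equiv.ext fun x => ?_
    obtain ⟨w, z⟩ := x
    simp only [Equiv.Perm.mul_apply, hG2, hG3]
    simp only [Prod.mk.injEq]
    constructor
    · trivial
    · ring
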